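/- With notation as in the abstract Kauffman state model: if moreover two specified elements d₁, d₂ ∈ S are excluded from the image of every admissible state (i.e., all injections κ : C → D \ {d₁, d₂}), then the spread of total δ-values satisfies max_κ Σ_c f(c,κ(c)) − min_κ Σ_c f(c,κ(c)) ≤ (1/2)(|S| − 2) = (1/2)|S| − 1. -/
import Mathlib


/-- Abstract Kauffman-state model with a marked point on a bad edge: two
distinguished bad domains `d₁ ≠ d₂` in `S` are excluded from the image of
every admissible state.  Then the spread of total δ-values over admissible
injective states is at most `(|S| - 2)/2 = |S|/2 - 1`. -/
theorem kauffman_delta_spread_marked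
    {C D : Type*} [Fintype C] [DecidableEq D]
    (S : Finset D) (d₁ d₂ : D)
    (hd₁ : d₁ ∈ S) (hd₂ : d₂ ∈ S) (hne : d₁ ≠ d₂)
    (f : C → D → ℝ)
    (hvals : ∀ c d, f c d = -1/4 ∨ f c d = 1/4)
    (hgood : ∀ c c' d, d ∉ S → f c d = f c' d)
    (κ κ' : C → D)
    (hκ : Function.Injective κ) (hκ' : Function.Injective κ')
    (hκd : ∀ c, κ c ≠ d₁ ∧ κ c ≠ d₂)
    (hκ'd : ∀ c, κ' c ≠ d₁ ∧ κ' c ≠ d₂)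
    (hrange : Set.range κ = Set.range κ') :
    (∑ c, f c (κ c)) - ∑ c, f c (κ' c) ≤ (1/2) * (S.card : ℝ) - 1 := by
  classical
  set g : D → ℝ := fun d => if h : Nonempty C then f (Classical.arbitrary C) d else 0 with hgdef
  have hg : ∀ c d, d ∉ S → f c d = g d := by
    intro c d hd
    have : Nonempty C := ⟨c⟩
    simp only [hgdef, dif_pos this]
    exact hgood c _ d hd
  -- split the sum
  have hsplit : ∀ (μ : C → D), Function.Injective μ →
      ∑ c, f c (μ c) =
        (∑ c ∈ Finset.univ.filter (fun c => μ c ∈ S), f c (μ c))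
        + ∑ d ∈ (Finset.univ.image μ) \ S, g d := by
    intro μ hμ
    rw [← Finset.sum_filter_add_sum_filter_not Finset.univ (fun c => μ c ∈ S)]
    congr 1
    have himg : (Finset.univ.image μ) \ S
        = (Finset.univ.filter (fun c => μ c ∉ S)).image μ := by
      ext d
      simp only [Finset.mem_sdiff, Finset.mem_image, Finset.mem_filter, Finset.mem_univ,
        true_and]
      constructor
      · rintro ⟨⟨c, rfl⟩, hd⟩; exact ⟨c, hd, rfl⟩
      · rintro ⟨c, hd, rfl⟩; exact ⟨⟨c, rfl⟩, hd⟩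
    rw [himg, Finset.sum_image (fun x _ y _ h => hμ h)]
    exact Finset.sum_congr rfl fun c hc => hg c _ (Finset.mem_filter.mp hc).2
  have himgs : Finset.univ.image κ = Finset.univ.image κ' := by
    apply Finset.coe_injective
    rw [Finset.coe_image, Finset.coe_image, Finset.coe_univ, Set.image_univ, Set.image_univ,
      hrange]
  have hcard : ∀ (μ : C → D), Function.Injective μ → (∀ c, μ c ≠ d₁ ∧ μ c ≠ d₂) →
      ((Finset.univ.filter (fun c => μ c ∈ S)).card : ℝ) ≤ (S.card : ℝ) - 2 := by
    intro μ hμ hμd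
    have hsub : (Finset.univ.filter (fun c => μ c ∈ S)).image μ ⊆ S \ {d₁, d₂} := by
      intro d hd
      simp only [Finset.mem_image, Finset.mem_filter, Finset.mem_univ, true_and] at hd
      obtain ⟨c, hcS, rfl⟩ := hd
      simp only [Finset.mem_sdiff, Finset.mem_insert, Finset.mem_singleton]
      exact ⟨hcS, by push_neg; exact hμd c⟩
    have h1 : (Finset.univ.filter (fun c => μ c ∈ S)).card
        = ((Finset.univ.filter (fun c => μ c ∈ S)).image μ).card :=
      (Finset.card_image_of_injective _ hμ).symm
    have h2 : ((Finset.univ.filter (fun c => μ c ∈ S)).image μ).card ≤ (S \ {d₁, d₂}).card :=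
      Finset.card_le_card hsub
    have h3 : (S \ {d₁, d₂}).card = S.card - 2 := by
      rw [Finset.card_sdiff_of_subset (by
        intro x hx
        simp only [Finset.mem_insert, Finset.mem_singleton] at hx
        rcases hx with rfl | rfl <;> assumption)]
      simp [Finset.card_insert_of_notMem, hne]
    have h4 : 2 ≤ S.card := by
      have : ({d₁, d₂} : Finset D).card = 2 := by simp [hne]
      calc 2 = ({d₁, d₂} : Finset D).card := this.symm
        _ ≤ S.card := Finset.card_le_card (by
            intro x hx
            simp only [Finset.mem_insert, Finset.mem_singleton] at hx
            rcases hx with rfl | rfl <;> assumption)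
    have := h1 ▸ h2
    have hle : (Finset.univ.filter (fun c => μ c ∈ S)).card ≤ S.card - 2 := h3 ▸ this
    have : ((Finset.univ.filter (fun c => μ c ∈ S)).card : ℝ) ≤ ((S.card - 2 : ℕ) : ℝ) := by
      exact_mod_cast hle
    rwa [Nat.cast_sub h4] at this
  -- bound the sums over the bad part
  have hub : ∀ (μ : C → D),
      (∑ c ∈ Finset.univ.filter (fun c => μ c ∈ S), f c (μ c))
        ≤ ((Finset.univ.filter (fun c => μ c ∈ S)).card : ℝ) * (1/4) := by
    intro μ
    calc (∑ c ∈ Finset.univ.filter (fun c => μ c ∈ S), f c (μ c))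
        ≤ ∑ c ∈ Finset.univ.filter (fun c => μ c ∈ S), (1/4 : ℝ) := by
          apply Finset.sum_le_sum
          intro c _
          rcases hvals c (μ c) with h | h <;> rw [h] <;> norm_num
      _ = _ := by rw [Finset.sum_const, nsmul_eq_mul]
  have hlb : ∀ (μ : C → D),
      -(((Finset.univ.filter (fun c => μ c ∈ S)).card : ℝ) * (1/4))
        ≤ ∑ c ∈ Finset.univ.filter (fun c => μ c ∈ S), f c (μ c) := by
    intro μ
    calc -(((Finset.univ.filter (fun c => μ c ∈ S)).card : ℝ) * (1/4))
        = ∑ c ∈ Finset.univ.filter (fun c => μ c ∈ S), (-(1/4) : ℝ) := by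
          rw [Finset.sum_const, nsmul_eq_mul]; ring
      _ ≤ _ := by
          apply Finset.sum_le_sum
          intro c _
          rcases hvals c (μ c) with h | h <;> rw [h] <;> norm_num
  rw [hsplit κ hκ, hsplit κ' hκ', himgs]
  have b1 := hub κ
  have b2 := hlb κ'
  have c1 := hcard κ hκ hκd
  have c2 := hcard κ' hκ' hκ'd
  nlinarith [b1, b2, c1, c2]
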